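/- Let (X,f) be a dynamical system. If there exist a positive integer m and a closed f^m-invariant subset Y of X such that (Y, f^m) admits a factor map onto the full shift ({0,1}^ℕ, σ), then there is a point in Y that is recurrent for f but not minimal for f. -/
import Mathlib


open Set Function

variable {X : Type*}

/-- A `δ`-pseudo-orbit of `f`. -/
def IsPseudoOrbit [MetricSpace X] (f : X → X) (δ : ℝ) (x : ℕ → X) : Prop :=
  ∀ n : ℕ, dist (f (x n)) (x (n + 1)) < δ

/-- `z` ε-traces the sequence `x`. -/
def Traces [MetricSpace X] (f : X → X) (ε : ℝ) (z : X) (x : ℕ → X) : Prop :=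
  ∀ n : ℕ, dist (f^[n] z) (x n) < ε

/-- The shadowing property. -/
def HasShadowing [MetricSpace X] (f : X → X) : Prop :=
  ∀ ε > (0 : ℝ), ∃ δ > (0 : ℝ), ∀ x : ℕ → X, IsPseudoOrbit f δ x → ∃ z : X, Traces f ε z x

/-- The shadowing property of the restriction of `f` to an invariant set `S`. -/
def HasShadowingOn [MetricSpace X] (f : X → X) (S : Set X) : Prop :=
  ∀ ε > (0 : ℝ), ∃ δ > (0 : ℝ), ∀ x : ℕ → X, (∀ n, x n ∈ S) → IsPseudoOrbit f δ x →
    ∃ z ∈ S, Traces f ε z x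

/-- Non-wandering point. -/
def NonWanderingPt [TopologicalSpace X] (f : X → X) (x : X) : Prop :=
  ∀ U ∈ nhds x, ∃ k : ℕ, 1 ≤ k ∧ ∃ y ∈ U, f^[k] y ∈ U

/-- The (forward) orbit of a point. -/
def orbitSet (f : X → X) (x : X) : Set X := Set.range fun n : ℕ => f^[n] x

/-- Recurrent point. -/
def RecurrentPt [TopologicalSpace X] (f : X → X) (x : X) : Prop :=
  ∀ U ∈ nhds x, ∃ k : ℕ, 1 ≤ k ∧ f^[k] x ∈ U

/-- Minimal point: every point of the orbit closure has `x` in its own orbit closure,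
i.e. the orbit closure of `x` is a minimal set. -/
def MinimalPt [TopologicalSpace X] (f : X → X) (x : X) : Prop :=
  ∀ y ∈ closure (orbitSet f x), x ∈ closure (orbitSet f y)

/-- Regularly recurrent point. -/
def RegRecPt [TopologicalSpace X] (f : X → X) (x : X) : Prop :=
  ∀ U ∈ nhds x, ∃ k : ℕ, 1 ≤ k ∧ ∀ n : ℕ, f^[k * n] x ∈ U

/-- Equicontinuity of the family of iterates of `f`. -/
def EquicontinuousMap [MetricSpace X] (f : X → X) : Prop :=
  ∀ ε > (0 : ℝ), ∃ δ > (0 : ℝ), ∀ x y : X, dist x y < δ →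
    ∀ n : ℕ, dist (f^[n] x) (f^[n] y) < ε

/-- `u` is a sensitive point of the subsystem on `S`. -/
def SensitivePtOn [MetricSpace X] (f : X → X) (S : Set X) (u : X) : Prop :=
  ∃ δ > (0 : ℝ), ∀ U ∈ nhds u, ∃ n : ℕ, ∃ a ∈ U ∩ S, ∃ b ∈ U ∩ S,
    dist (f^[n] a) (f^[n] b) > δ

/-- `u` is a sensitive point of `(X,f)`. -/
def SensitivePt [MetricSpace X] (f : X → X) (u : X) : Prop :=
  ∃ δ > (0 : ℝ), ∀ U ∈ nhds u, ∃ n : ℕ, ∃ a ∈ U, ∃ b ∈ U,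
    dist (f^[n] a) (f^[n] b) > δ

/-- Topological transitivity. -/
def TopTransitive {Y : Type*} [TopologicalSpace Y] (g : Y → Y) : Prop :=
  ∀ U V : Set Y, IsOpen U → U.Nonempty → IsOpen V → V.Nonempty →
    ∃ n : ℕ, 1 ≤ n ∧ (g^[n] '' U ∩ V).Nonempty

/-- Weak mixing: the product system is transitive. -/
def WeaklyMixing [TopologicalSpace X] (f : X → X) : Prop :=
  TopTransitive (fun p : X × X => (f p.1, f p.2))

/-- Strong mixing. -/
def StronglyMixing {Y : Type*} [TopologicalSpace Y] (g : Y → Y) : Prop :=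
  ∀ U V : Set Y, IsOpen U → U.Nonempty → IsOpen V → V.Nonempty →
    ∃ N : ℕ, ∀ n ≥ N, (g^[n] '' U ∩ V).Nonempty

/-- The shift map on the full shift over `d` symbols. -/
def shiftMap (d : ℕ) : (ℕ → Fin d) → (ℕ → Fin d) := fun x n => x (n + 1)

/-- `π` is a factor map from the subsystem `(Y, f^[m])` onto the full shift on `d` symbols. -/
def FactorOntoShift [TopologicalSpace X] (f : X → X) (m : ℕ) (Y : Set X) (d : ℕ)
    (π : X → (ℕ → Fin d)) : Prop :=
  ContinuousOn π Y ∧ π '' Y = Set.univ ∧ ∀ y ∈ Y, π (f^[m] y) = shiftMap d (π y)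


namespace ShiftAux

lemma shift_continuous (d : ℕ) : Continuous (shiftMap d) :=
  continuous_pi fun n => continuous_apply (n + 1)

lemma shift_iterate (d : ℕ) (x : ℕ → Fin d) (k n : ℕ) : (shiftMap d)^[k] x n = x (n + k) := by
  induction k generalizing x n with
  | zero => rfl
  | succ k ih =>
    rw [Function.iterate_succ_apply]
    rw [ih]
    show x (n + k + 1) = x (n + (k + 1))
    ring_nf

/-- cylinder neighborhoods -/
lemma cylinder {d : ℕ} {u : ℕ → Fin d} {S : Set (ℕ → Fin d)} (hS : S ∈ nhds u) :
    ∃ J, ∀ v : ℕ → Fin d, (∀ i < J, v i = u i) → v ∈ S := by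
  rw [nhds_pi, Filter.mem_pi] at hS
  obtain ⟨I, hIfin, V, hV, hsub⟩ := hS
  obtain ⟨J, hJ⟩ := hIfin.bddAbove
  refine ⟨J + 1, fun v hv => hsub ?_⟩
  intro i hi
  have hiJ : i < J + 1 := Nat.lt_succ_of_le (hJ hi)
  rw [hv i hiJ]
  have := hV i
  rwa [nhds_discrete, Filter.mem_pure] at this

/-- The word sequence generating a recurrent point. -/
def wseq : ℕ → List (Fin 2)
  | 0 => [0, 1]
  | j + 1 => wseq j ++ (List.replicate (wseq j).length 0 ++
      (List.replicate (wseq j).length 1 ++ wseq j))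

lemma wseq_len_succ (j : ℕ) : (wseq (j + 1)).length = 4 * (wseq j).length := by
  simp [wseq]; ring

lemma wseq_len_pos (j : ℕ) : 0 < (wseq j).length := by
  induction j with
  | zero => simp [wseq]
  | succ j ih => rw [wseq_len_succ]; omega

lemma lt_wseq_len_self (n : ℕ) : n < (wseq n).length := by
  induction n with
  | zero => simp [wseq]
  | succ n ih => rw [wseq_len_succ]; omega

lemma wseq_prefix {j k : ℕ} (h : j ≤ k) : wseq j <+: wseq k := by
  induction k with
  | zero => rw [Nat.le_zero.mp h]
  | succ k ih =>
    rcases Nat.lt_or_ge j (k+1) with h' | h'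
    · exact (ih (Nat.lt_succ_iff.mp h')).trans (List.prefix_append _ _)
    · rw [Nat.le_antisymm h h']

/-- the recurrent point -/
def om : ℕ → Fin 2 := fun n => (wseq n).getD n 0

lemma om_eq {j n : ℕ} (h : n < (wseq j).length) : om n = (wseq j).getD n 0 := by
  rcases Nat.le_total j n with hjn | hjn
  · unfold om
    obtain ⟨t, ht⟩ := wseq_prefix hjn
    rw [← ht, List.getD_append _ _ _ _ h]
  · unfold om
    obtain ⟨t, ht⟩ := wseq_prefix hjn
    rw [← ht, List.getD_append _ _ _ _ (lt_wseq_len_self n)]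

lemma om_block0 {j i : ℕ} (h : i < (wseq j).length) : om (i + (wseq j).length) = 0 := by
  set L := (wseq j).length with hL
  have h4 : i + L < (wseq (j+1)).length := by rw [wseq_len_succ]; omega
  rw [om_eq h4]
  have e : wseq (j+1) = wseq j ++ (List.replicate L 0 ++ (List.replicate L 1 ++ wseq j)) := rfl
  rw [e]
  rw [List.getD_append_right _ _ _ _ (by omega : L ≤ i + L)]
  have : i + L - L = i := by omega
  rw [this, List.getD_append _ _ _ _ (by simpa using h)]
  rw [List.getD_eq_getElem _ _ (by simpa using h), List.getElem_replicate]

lemma om_block1 {j i : ℕ} (h : i < (wseq j).length) : om (i + 2 * (wseq j).length) = 1 := by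
  set L := (wseq j).length with hL
  have h4 : i + 2 * L < (wseq (j+1)).length := by rw [wseq_len_succ]; omega
  rw [om_eq h4]
  have e : wseq (j+1) = wseq j ++ (List.replicate L 0 ++ (List.replicate L 1 ++ wseq j)) := rfl
  rw [e]
  rw [List.getD_append_right _ _ _ _ (by omega : L ≤ i + 2 * L)]
  have h1 : i + 2 * L - L = i + L := by omega
  rw [h1, List.getD_append_right _ _ _ _ (by simp only [List.length_replicate]; omega : (List.replicate L (0 : Fin 2)).length ≤ i + L)]
  have h2 : i + L - (List.replicate L (0 : Fin 2)).length = i := by simp only [List.length_replicate]; omega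
  rw [h2, List.getD_append _ _ _ _ (by simpa using h)]
  rw [List.getD_eq_getElem _ _ (by simpa using h), List.getElem_replicate]

lemma om_rec {j i : ℕ} (h : i < (wseq j).length) : om (i + 3 * (wseq j).length) = om i := by
  set L := (wseq j).length with hL
  have h4 : i + 3 * L < (wseq (j+1)).length := by rw [wseq_len_succ]; omega
  rw [om_eq h4, om_eq h]
  have e : wseq (j+1) = wseq j ++ (List.replicate L 0 ++ (List.replicate L 1 ++ wseq j)) := rfl
  rw [e]
  rw [List.getD_append_right _ _ _ _ (by omega : L ≤ i + 3 * L)]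
  have h1 : i + 3 * L - L = i + 2 * L := by omega
  rw [h1, List.getD_append_right _ _ _ _ (by simp only [List.length_replicate]; omega : (List.replicate L (0 : Fin 2)).length ≤ i + 2 * L)]
  have h2 : i + 2 * L - (List.replicate L (0 : Fin 2)).length = i + L := by simp only [List.length_replicate]; omega
  rw [h2, List.getD_append_right _ _ _ _ (by simp only [List.length_replicate]; omega : (List.replicate L (1 : Fin 2)).length ≤ i + L)]
  have h3 : i + L - (List.replicate L (1 : Fin 2)).length = i := by simp only [List.length_replicate]; omega
  rw [h3]

lemma om_recurrent : ∀ S ∈ nhds om, ∃ k, 1 ≤ k ∧ (shiftMap 2)^[k] om ∈ S := by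
  intro S hS
  obtain ⟨J, hJ⟩ := cylinder hS
  set L := (wseq J).length with hL
  refine ⟨3 * L, by have := wseq_len_pos J; omega, hJ _ fun i hi => ?_⟩
  rw [shift_iterate]
  exact om_rec (lt_of_lt_of_le hi (le_of_lt (lt_wseq_len_self J)))

lemma zero_mem_cl : (fun _ => (0 : Fin 2)) ∈ closure (orbitSet (shiftMap 2) om) := by
  rw [mem_closure_iff_nhds]
  intro S hS
  obtain ⟨J, hJ⟩ := cylinder hS
  refine ⟨(shiftMap 2)^[(wseq J).length] om, hJ _ fun i hi => ?_, ⟨(wseq J).length, rfl⟩⟩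
  rw [shift_iterate]
  exact om_block0 (lt_of_lt_of_le hi (le_of_lt (lt_wseq_len_self J)))

lemma one_mem_cl : (fun _ => (1 : Fin 2)) ∈ closure (orbitSet (shiftMap 2) om) := by
  rw [mem_closure_iff_nhds]
  intro S hS
  obtain ⟨J, hJ⟩ := cylinder hS
  refine ⟨(shiftMap 2)^[2 * (wseq J).length] om, hJ _ fun i hi => ?_, ⟨2 * (wseq J).length, rfl⟩⟩
  rw [shift_iterate]
  exact om_block1 (lt_of_lt_of_le hi (le_of_lt (lt_wseq_len_self J)))

lemma orbit_zero : orbitSet (shiftMap 2) (fun _ => (0 : Fin 2)) = {fun _ => (0 : Fin 2)} := by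
  apply Set.eq_singleton_iff_unique_mem.mpr
  refine ⟨⟨0, rfl⟩, ?_⟩
  rintro _ ⟨k, rfl⟩
  funext n
  show (shiftMap 2)^[k] (fun _ => (0 : Fin 2)) n = 0
  rw [shift_iterate]

end ShiftAux

attribute [local instance] Ultrafilter.add Ultrafilter.addSemigroup

namespace DynAux

open Filter

/-- Every nonempty compact invariant set contains a minimal subsystem. -/
lemma exists_minimal_subsystem {X : Type*} [TopologicalSpace X] [CompactSpace X]
    {g : X → X} {D : Set X} (hD : IsClosed D) (hne : D.Nonempty) (hinv : MapsTo g D D) :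
    ∃ E, E ⊆ D ∧ E.Nonempty ∧ IsClosed E ∧ MapsTo g E E ∧
      ∀ A, A ⊆ E → A.Nonempty → IsClosed A → MapsTo g A A → A = E := by
  set S : Set (Set X) := {A | A.Nonempty ∧ IsClosed A ∧ MapsTo g A A} with hs
  have key : ∀ c ⊆ S, IsChain (· ⊆ ·) c → c.Nonempty → ∃ lb ∈ S, ∀ s ∈ c, lb ⊆ s := by
    intro c hcS hchain hcne
    haveI : Nonempty c := hcne.coe_sort
    have hdir : Directed (· ⊇ ·) (fun A : c => (A : Set X)) :=
      DirectedOn.directed_val (IsChain.directedOn hchain.symm)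
    have hne' : (⋂ A : c, (A : Set X)).Nonempty :=
      IsCompact.nonempty_iInter_of_directed_nonempty_isCompact_isClosed _ hdir
        (fun A => (hcS A.2).1) (fun A => (hcS A.2).2.1.isCompact)
        (fun A => (hcS A.2).2.1)
    refine ⟨⋂ A : c, (A : Set X), ⟨hne', isClosed_iInter fun A => (hcS A.2).2.1, ?_⟩,
      fun s hs' => iInter_subset_of_subset ⟨s, hs'⟩ le_rfl⟩
    intro x hx
    simp only [mem_iInter] at hx ⊢
    exact fun A => (hcS A.2).2.2 (hx A)
  obtain ⟨E, hED, hE⟩ := zorn_superset_nonempty S key D ⟨hne, hD, hinv⟩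
  exact ⟨E, hED, hE.prop.1, hE.prop.2.1, hE.prop.2.2,
    fun A hAE h1 h2 h3 => hE.eq_of_le (y := A) ⟨h1, h2, h3⟩ hAE⟩

/-- Lifting a recurrent point through a factor map, via idempotent ultrafilters. -/
lemma exists_recurrent_lift {X Z : Type*} [MetricSpace X] [CompactSpace X]
    [TopologicalSpace Z] [T2Space Z]
    {g : X → X} (hg : Continuous g) {Y : Set X} (hY : IsClosed Y) (hinv : MapsTo g Y Y)
    {π : X → Z} (hπ : ContinuousOn π Y) {S : Z → Z} (hS : Continuous S)
    (hsemi : ∀ y ∈ Y, π (g y) = S (π y)) {z : Z}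
    (hz : ∀ U ∈ nhds z, ∃ k, 1 ≤ k ∧ S^[k] z ∈ U) {x₀ : X} (hx₀ : x₀ ∈ Y) (hπx₀ : π x₀ = z) :
    ∃ x ∈ Y, π x = z ∧ ∀ U ∈ nhds x, ∃ k, 1 ≤ k ∧ g^[k] x ∈ U := by
  classical
  -- the filter of "return times"
  set F : Filter ℕ := Filter.comap (fun k => S^[k] z) (nhds z) ⊓ Filter.principal {k | 1 ≤ k}
    with hF
  have hmemF : ∀ s ∈ F, ∃ U ∈ nhds z, {k | 1 ≤ k ∧ S^[k] z ∈ U} ⊆ s := by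
    intro s hs
    rw [hF, Filter.mem_inf_iff] at hs
    obtain ⟨t₁, ht₁, t₂, ht₂, rfl⟩ := hs
    obtain ⟨U, hU, hUsub⟩ := Filter.mem_comap.mp ht₁
    refine ⟨U, hU, fun k hk => ⟨hUsub hk.2, ?_⟩⟩
    exact Filter.mem_principal.mp ht₂ hk.1
  have hFne : F.NeBot := by
    refine Filter.forall_mem_nonempty_iff_neBot.mp ?_
    intro s hs
    obtain ⟨U, hU, hsub⟩ := hmemF s hs
    obtain ⟨k, hk1, hk2⟩ := hz U hU
    exact ⟨k, hsub ⟨hk1, hk2⟩⟩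
  -- the compact subsemigroup of ultrafilters finer than F
  set Sg : Set (Ultrafilter ℕ) := {q | ↑q ≤ F} with hSg
  have hSgclosed : IsClosed Sg := by
    have : Sg = ⋂ s ∈ F.sets, {q : Ultrafilter ℕ | s ∈ q} := by
      ext q
      simp only [hSg, mem_setOf_eq, mem_iInter]
      exact ⟨fun h s hs => h hs, fun h s hs => h s hs⟩
    rw [this]
    exact isClosed_biInter fun s _ => ultrafilter_isClosed_basic s
  have hSgne : Sg.Nonempty := by
    obtain ⟨q, hq⟩ := Ultrafilter.exists_le F
    exact ⟨q, hq⟩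
  have hSgadd : ∀ q ∈ Sg, ∀ q' ∈ Sg, q + q' ∈ Sg := by
    intro q hq q' hq' s hs
    obtain ⟨U, hU, hsub⟩ := hmemF s hs
    have hUo : interior U ∈ nhds z := interior_mem_nhds.mpr hU
    refine Filter.mem_of_superset ?_ hsub
    have : ∀ᶠ m in ↑q, ∀ᶠ m' in ↑q', 1 ≤ m + m' ∧ S^[m + m'] z ∈ U := by
      have hqU : {k | 1 ≤ k ∧ S^[k] z ∈ interior U} ∈ q := by
        apply hq
        rw [hF]
        refine Filter.mem_inf_of_inter (Filter.preimage_mem_comap hUo) (Filter.mem_principal_self _) ?_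
        intro k hk
        exact ⟨hk.2, hk.1⟩
      filter_upwards [hqU] with m hm
      have hV : (S^[m]) ⁻¹' (interior U) ∈ nhds z := by
        refine (hS.iterate m).continuousAt.preimage_mem_nhds ?_
        exact isOpen_interior.mem_nhds hm.2
      have hq'V : {k | 1 ≤ k ∧ S^[k] z ∈ (S^[m]) ⁻¹' (interior U)} ∈ q' := by
        apply hq'
        rw [hF]
        refine Filter.mem_inf_of_inter (Filter.preimage_mem_comap hV) (Filter.mem_principal_self _) ?_
        intro k hk
        exact ⟨hk.2, hk.1⟩
      filter_upwards [hq'V] with m' hm'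
      refine ⟨by omega, ?_⟩
      have : S^[m + m'] z = S^[m] (S^[m'] z) := Function.iterate_add_apply S m m' z
      rw [this]
      exact interior_subset hm'.2
    exact (Ultrafilter.eventually_add q q' _).mpr this
  obtain ⟨p, hpSg, hpidem⟩ := exists_idempotent_in_compact_add_subsemigroup
    (fun r => Ultrafilter.continuous_add_left r) Sg hSgne (hSgclosed.isCompact) hSgadd
  -- basic membership facts for p
  have hones : {k | 1 ≤ k} ∈ p := by
    apply hpSg
    rw [hF]
    exact Filter.mem_inf_of_right (Filter.mem_principal_self _)
  have hptend : Tendsto (fun k => S^[k] z) ↑p (nhds z) := by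
    have h1 : ↑p ≤ F := hpSg
    exact Filter.tendsto_iff_comap.mpr (h1.trans inf_le_left)
  -- the lifted point
  set a : ℕ → X := fun n => g^[n] x₀ with ha
  have haY : ∀ n, a n ∈ Y := fun n => hinv.iterate n hx₀
  obtain ⟨x, hx⟩ := isCompact_univ.ultrafilter_le_nhds (p.map a)
    (by simp [Filter.le_principal_iff])
  have hxlim : Tendsto a ↑p (nhds x) := by
    rw [Filter.Tendsto, ← Ultrafilter.coe_map]; exact hx.2
  have hYp : ∀ᶠ n in ↑p, a n ∈ Y := Filter.Eventually.of_forall haY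
  have hxY : x ∈ Y := hY.mem_of_tendsto hxlim hYp
  -- π x = z
  have hsemiIter : ∀ n, ∀ y ∈ Y, π (g^[n] y) = S^[n] (π y) := by
    intro n
    induction n with
    | zero => intro y _; rfl
    | succ n ih =>
      intro y hy
      rw [Function.iterate_succ_apply, Function.iterate_succ_apply]
      rw [ih (g y) (hinv hy), hsemi y hy]
  have hπa : ∀ n, π (a n) = S^[n] z := by
    intro n
    rw [ha]
    simp only
    rw [hsemiIter n x₀ hx₀, hπx₀]
  have hπtend : Tendsto (fun n => π (a n)) ↑p (nhds (π x)) := by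
    have hcw : Tendsto π (nhds x ⊓ Filter.principal Y) (nhds (π x)) := by
      have := hπ x hxY
      rwa [ContinuousWithinAt, nhdsWithin] at this
    exact hcw.comp (Filter.tendsto_inf.mpr ⟨hxlim, Filter.le_principal_iff.mpr hYp⟩)
  have hπxz : π x = z := by
    have h1 : Tendsto (fun n => S^[n] z) ↑p (nhds (π x)) := by
      have : (fun n => π (a n)) = fun n => S^[n] z := funext hπa
      rwa [this] at hπtend
    exact tendsto_nhds_unique h1 hptend
  -- recurrence of x
  refine ⟨x, hxY, hπxz, ?_⟩
  intro U hU
  obtain ⟨ε, hε, hball⟩ := Metric.mem_nhds_iff.mp hU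
  set C : Set X := Metric.closedBall x (ε / 2) with hC
  have hCU : C ⊆ U := fun y hy =>
    hball (lt_of_le_of_lt (Metric.mem_closedBall.mp hy) (by linarith))
  have hCnhds : C ∈ nhds x := Metric.closedBall_mem_nhds x (by linarith)
  have hCp : {n | a n ∈ C} ∈ p := hxlim hCnhds
  have hCpp : {n | a n ∈ C} ∈ p + p := by rwa [hpidem]
  have hdouble : ∀ᶠ m in ↑p, ∀ᶠ m' in ↑p, a (m + m') ∈ C :=
    (Ultrafilter.eventually_add p p _).mp hCpp
  have hgood : ∀ᶠ m in ↑p, 1 ≤ m ∧ g^[m] x ∈ C := by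
    filter_upwards [hdouble, hones] with m hm hm1
    refine ⟨hm1, ?_⟩
    have htend2 : Tendsto (fun m' => g^[m] (a m')) ↑p (nhds (g^[m] x)) :=
      ((hg.iterate m).continuousAt.tendsto).comp hxlim
    have hev : ∀ᶠ m' in ↑p, g^[m] (a m') ∈ C := by
      filter_upwards [hm] with m' hm'
      have : g^[m] (a m') = a (m + m') := by
        rw [ha]; simp only
        rw [← Function.iterate_add_apply]
      rwa [this]
    exact Metric.isClosed_closedBall.mem_of_tendsto htend2 hev
  obtain ⟨k, hk⟩ := Filter.Eventually.exists hgood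
  exact ⟨k, hk.1, hCU hk.2⟩

lemma semiconj_iterate {X Z : Type*} {g : X → X} {Y : Set X} (hinv : Set.MapsTo g Y Y)
    {π : X → Z} {S : Z → Z} (hsemi : ∀ y ∈ Y, π (g y) = S (π y)) :
    ∀ n, ∀ y ∈ Y, π (g^[n] y) = S^[n] (π y) := by
  intro n
  induction n with
  | zero => intro y _; rfl
  | succ n ih =>
    intro y hy
    rw [Function.iterate_succ_apply, Function.iterate_succ_apply]
    rw [ih (g y) (hinv hy), hsemi y hy]

end DynAux


open ShiftAux DynAux Filter in
theorem shift_factor_gives_recurrent_nonminimal [MetricSpace X] [CompactSpace X]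
    (f : X → X) (hf : Continuous f) (m : ℕ) (hm : 1 ≤ m)
    (Y : Set X) (hYc : IsClosed Y) (hYinv : Set.MapsTo f^[m] Y Y)
    (π : X → (ℕ → Fin 2)) (hπ : FactorOntoShift f m Y 2 π) :
    ∃ x ∈ Y, RecurrentPt f x ∧ ¬ MinimalPt f x := by
  classical
  set g : X → X := f^[m] with hgdef
  have hg : Continuous g := hf.iterate m
  set σ : (ℕ → Fin 2) → (ℕ → Fin 2) := shiftMap 2 with hσdef
  obtain ⟨hπcont, hπsurj, hπsemi⟩ := hπ
  have hsemi : ∀ y ∈ Y, π (g y) = σ (π y) := fun y hy => hπsemi y hy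
  -- a preimage of the recurrent word
  have hom_mem : ShiftAux.om ∈ π '' Y := by rw [hπsurj]; exact Set.mem_univ _
  obtain ⟨x₀, hx₀Y, hπx₀⟩ := hom_mem
  -- lift recurrence
  obtain ⟨x, hxY, hπx, hrec⟩ := DynAux.exists_recurrent_lift hg hYc hYinv hπcont
    (ShiftAux.shift_continuous 2) hsemi ShiftAux.om_recurrent hx₀Y hπx₀
  have hsemiIter : ∀ n, ∀ y ∈ Y, π (g^[n] y) = σ^[n] (π y) :=
    DynAux.semiconj_iterate hYinv hsemi
  refine ⟨x, hxY, ?_, ?_⟩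
  · -- recurrent for f
    intro U hU
    obtain ⟨k, hk1, hk2⟩ := hrec U hU
    refine ⟨m * k, Nat.one_le_iff_ne_zero.mpr (by positivity), ?_⟩
    rw [Function.iterate_mul]
    exact hk2
  · -- not minimal
    intro hmin
    set C : Set X := closure (orbitSet g x) with hCdef
    have horbY : orbitSet g x ⊆ Y := by rintro _ ⟨n, rfl⟩; exact hYinv.iterate n hxY
    have hCY : C ⊆ Y := hYc.closure_subset_iff.mpr horbY
    have hCclosed : IsClosed C := isClosed_closure
    have hxC : x ∈ C := subset_closure ⟨0, rfl⟩
    have horbinv : g '' orbitSet g x ⊆ orbitSet g x := by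
      rintro _ ⟨_, ⟨n, rfl⟩, rfl⟩
      refine ⟨n + 1, ?_⟩
      show g^[n + 1] x = g (g^[n] x)
      exact Function.iterate_succ_apply' g n x
    have hCinv : Set.MapsTo g C C := by
      intro c hc
      have h2 : g '' C ⊆ closure (g '' orbitSet g x) := hg.continuousOn.image_closure
      exact closure_mono horbinv (h2 (Set.mem_image_of_mem _ hc))
    obtain ⟨E, hEC, hEne, hEclosed, hEinv, hEmin⟩ :=
      DynAux.exists_minimal_subsystem hCclosed ⟨x, hxC⟩ hCinv
    have hEcompact : IsCompact E := hEclosed.isCompact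
    have himgclosed : ∀ j : ℕ, IsClosed (f^[j] '' E) :=
      fun j => (hEcompact.image (hf.iterate j)).isClosed
    set L : Set X := ⋃ j ∈ Finset.range m, f^[j] '' E with hLdef
    have hLclosed : IsClosed L :=
      (Finset.range m).finite_toSet.isClosed_biUnion (fun j _ => himgclosed j)
    have horb_gf : orbitSet g x ⊆ orbitSet f x := by
      rintro _ ⟨n, rfl⟩
      refine ⟨m * n, ?_⟩
      show f^[m * n] x = g^[n] x
      rw [Function.iterate_mul]
    have hLsub : L ⊆ closure (orbitSet f x) := by
      intro a ha
      simp only [hLdef, Set.mem_iUnion, Finset.mem_range] at ha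
      obtain ⟨j, hj, e, he, rfl⟩ := ha
      have h1 : f^[j] '' C ⊆ closure (f^[j] '' orbitSet g x) :=
        (hf.iterate j).continuousOn.image_closure
      have h2 : f^[j] '' orbitSet g x ⊆ orbitSet f x := by
        rintro _ ⟨_, ⟨n, rfl⟩, rfl⟩
        refine ⟨j + m * n, ?_⟩
        show f^[j + m * n] x = f^[j] (g^[n] x)
        rw [Function.iterate_add_apply, Function.iterate_mul]
      exact closure_mono h2 (h1 (Set.mem_image_of_mem _ (hEC he)))
    have hcomm : ∀ (j : ℕ) (e : X), g (f^[j] e) = f^[j] (g e) := by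
      intro j e
      rw [hgdef, ← Function.iterate_add_apply, ← Function.iterate_add_apply, Nat.add_comm]
    have hLinv : Set.MapsTo f L L := by
      intro a ha
      simp only [hLdef, Set.mem_iUnion, Finset.mem_range] at ha ⊢
      obtain ⟨j, hj, e, he, rfl⟩ := ha
      have hstep : f (f^[j] e) = f^[j + 1] e := (Function.iterate_succ_apply' f j e).symm
      rcases Nat.lt_or_ge (j + 1) m with hlt | hge
      · exact ⟨j + 1, hlt, e, he, hstep.symm⟩
      · have hjm : j + 1 = m := by omega
        refine ⟨0, by omega, g e, hEinv he, ?_⟩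
        show f^[0] (g e) = f (f^[j] e)
        rw [Function.iterate_zero_apply, hstep, hjm]
    obtain ⟨e₀, he₀⟩ := hEne
    have he₀cl : e₀ ∈ closure (orbitSet f x) :=
      closure_mono horb_gf (hEC he₀)
    have hx_in : x ∈ closure (orbitSet f e₀) := hmin e₀ he₀cl
    have he₀L : e₀ ∈ L := by
      simp only [hLdef, Set.mem_iUnion, Finset.mem_range]
      exact ⟨0, by omega, e₀, he₀, Function.iterate_zero_apply f e₀⟩
    have horbL : ∀ n, f^[n] e₀ ∈ L := by
      intro n
      induction n with
      | zero => exact he₀L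
      | succ n ih => rw [Function.iterate_succ_apply']; exact hLinv ih
    have hclL : closure (orbitSet f e₀) ⊆ L := by
      apply closure_minimal _ hLclosed
      rintro _ ⟨n, rfl⟩
      exact horbL n
    have hxL : x ∈ L := hclL hx_in
    simp only [hLdef, Set.mem_iUnion, Finset.mem_range] at hxL
    obtain ⟨j, hjm, e, he, hxe⟩ := hxL
    set E' : Set X := f^[j] '' E with hE'def
    have hxE' : x ∈ E' := ⟨e, he, hxe⟩
    have hE'inv : Set.MapsTo g E' E' := by
      rintro _ ⟨e', he', rfl⟩
      rw [hcomm j e']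
      exact ⟨g e', hEinv he', rfl⟩
    have hjmfull : j + (m - j) = m := by omega
    have hE'min : ∀ A, A ⊆ E' → A.Nonempty → IsClosed A → Set.MapsTo g A A → A = E' := by
      intro A hA hAne hAcl hAinv
      set B : Set X := f^[m - j] '' A with hBdef
      have hBE : B ⊆ E := by
        rintro _ ⟨a, haA, rfl⟩
        obtain ⟨e', he', rfl⟩ := hA haA
        have : f^[m - j] (f^[j] e') = g e' := by
          rw [← Function.iterate_add_apply]
          rw [hgdef]
          congr 1
          omega
        rw [this]
        exact hEinv he'
      have hBne : B.Nonempty := hAne.image _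
      have hBcl : IsClosed B := (hAcl.isCompact.image (hf.iterate _)).isClosed
      have hBinv : Set.MapsTo g B B := by
        rintro _ ⟨a, haA, rfl⟩
        rw [hcomm (m - j) a]
        exact ⟨g a, hAinv haA, rfl⟩
      have hBE' : B = E := hEmin B hBE hBne hBcl hBinv
      apply subset_antisymm hA
      have himg : f^[j] '' B ⊆ A := by
        rintro _ ⟨_, ⟨a, haA, rfl⟩, rfl⟩
        have : f^[j] (f^[m - j] a) = g a := by
          rw [← Function.iterate_add_apply, hgdef]
          have hj' : j + (m - j) = m := by omega
          rw [hj']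
        rw [this]
        exact hAinv haA
      calc E' = f^[j] '' B := by rw [hBE']
        _ ⊆ A := himg
    have hCE'aux : ∀ n, g^[n] x ∈ E' := by
      intro n
      induction n with
      | zero => exact hxE'
      | succ n ih => rw [Function.iterate_succ_apply']; exact hE'inv ih
    have hCE' : C ⊆ E' := by
      apply closure_minimal _ (himgclosed j)
      rintro _ ⟨n, rfl⟩
      exact hCE'aux n
    have hCeq : C = E' := hE'min C hCE' ⟨x, hxC⟩ hCclosed hCinv
    -- the image of C under π contains the orbit closure of om
    have hπCcompact : IsCompact (π '' C) :=
      hCclosed.isCompact.image_of_continuousOn (hπcont.mono hCY)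
    have hπCclosed : IsClosed (π '' C) := hπCcompact.isClosed
    have horbom : orbitSet σ ShiftAux.om ⊆ π '' C := by
      rintro _ ⟨n, rfl⟩
      refine ⟨g^[n] x, subset_closure ⟨n, rfl⟩, ?_⟩
      rw [hsemiIter n x hxY, hπx]
    have hclom : closure (orbitSet σ ShiftAux.om) ⊆ π '' C :=
      closure_minimal horbom hπCclosed
    have h0 : (fun _ => (0 : Fin 2)) ∈ π '' C := hclom ShiftAux.zero_mem_cl
    have h1 : (fun _ => (1 : Fin 2)) ∈ π '' C := hclom ShiftAux.one_mem_cl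
    obtain ⟨w, hwC, hπw⟩ := h0
    have hworbCaux : ∀ n, g^[n] w ∈ C := by
      intro n
      induction n with
      | zero => exact hwC
      | succ n ih => rw [Function.iterate_succ_apply']; exact hCinv ih
    have hworbC : closure (orbitSet g w) ⊆ C := by
      apply closure_minimal _ hCclosed
      rintro _ ⟨n, rfl⟩
      exact hworbCaux n
    have hworbinv : Set.MapsTo g (closure (orbitSet g w)) (closure (orbitSet g w)) := by
      intro c hc
      have h2 : g '' closure (orbitSet g w) ⊆ closure (g '' orbitSet g w) :=
        hg.continuousOn.image_closure
      have h3 : g '' orbitSet g w ⊆ orbitSet g w := by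
        rintro _ ⟨_, ⟨n, rfl⟩, rfl⟩
        refine ⟨n + 1, ?_⟩
        show g^[n + 1] w = g (g^[n] w)
        exact Function.iterate_succ_apply' g n w
      exact closure_mono h3 (h2 (Set.mem_image_of_mem _ hc))
    have hweq : closure (orbitSet g w) = E' :=
      hE'min _ (hworbC.trans hCE') ⟨w, subset_closure ⟨0, rfl⟩⟩ isClosed_closure hworbinv
    have hπorbw : π '' orbitSet g w ⊆ {fun _ => (0 : Fin 2)} := by
      rintro _ ⟨_, ⟨n, rfl⟩, rfl⟩
      have hwY : w ∈ Y := hCY hwC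
      rw [hsemiIter n w hwY, hπw]
      have : σ^[n] (fun _ => (0 : Fin 2)) ∈ orbitSet σ (fun _ => (0 : Fin 2)) := ⟨n, rfl⟩
      rwa [ShiftAux.orbit_zero] at this
    have hπC0 : π '' C ⊆ {fun _ => (0 : Fin 2)} := by
      have hCw : C = closure (orbitSet g w) := by rw [hCeq, hweq]
      rw [hCw]
      have hcont' : ContinuousOn π (closure (orbitSet g w)) := by
        rw [← hCw]
        exact hπcont.mono hCY
      refine (hcont'.image_closure).trans ?_
      exact closure_minimal hπorbw isClosed_singleton
    have : (fun _ => (1 : Fin 2)) = (fun _ => (0 : Fin 2)) := hπC0 h1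
    have h01 : (1 : Fin 2) = 0 := congrFun this 0
    simp at h01
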